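/- Let q = p^v with n = p^u a power of p, and let α ∈ F_{q^n}. Then α is a normal element of F_{q^n} over F_q if and only if Tr(α) ≠ 0, where Tr is the trace from F_{q^n} to F_q. -/

import Mathlib

open Polynomial Finset

lemma aux_nilp_li {F M : Type*} [Field F] [AddCommGroup M] [Module F M] (T : Module.End F M) :
    ∀ (m : ℕ) (β : M) (c : ℕ → F), (T ^ m) β = 0 → (T ^ (m - 1)) β ≠ 0 →
      (∑ i ∈ Finset.range m, c i • (T ^ i) β) = 0 → ∀ i < m, c i = 0 := by
  intro m
  induction m with
  | zero => exact fun β c _ _ _ i hi => absurd hi (Nat.not_lt_zero i)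
  | succ k ih =>
    intro β c h0 h1 hsum i hi
    have h1' : (T ^ k) β ≠ 0 := by simpa using h1
    have hc0 : c 0 = 0 := by
      have h2 := congrArg (T ^ k) hsum
      rw [map_sum, map_zero] at h2
      have h3 : ∀ i ∈ Finset.range (k + 1),
          (T ^ k) (c i • (T ^ i) β) = if i = 0 then c 0 • (T ^ k) β else 0 := by
        intro i _
        rcases Nat.eq_zero_or_pos i with h | h
        · subst h; simp
        · rw [if_neg h.ne', map_smul]
          have hik : k + i = (i - 1) + (k + 1) := by omega
          have he : (T ^ k) ((T ^ i) β) = (T ^ (i - 1)) ((T ^ (k + 1)) β) := by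
            rw [← Module.End.mul_apply, ← Module.End.mul_apply, ← pow_add, ← pow_add, hik]
          rw [he, h0, map_zero, smul_zero]
      rw [Finset.sum_congr rfl h3, Finset.sum_ite_eq' (Finset.range (k + 1)) 0] at h2
      simp only [Finset.mem_range, Nat.succ_pos, if_pos] at h2
      rcases smul_eq_zero.mp h2 with h | h
      · exact h
      · exact absurd h h1'
    rcases i with _ | j
    · exact hc0
    · have hjk : j < k := by omega
      have hk : 1 ≤ k := by omega
      refine ih (T β) (fun t => c (t + 1)) ?_ ?_ ?_ j hjk
      · rw [← Module.End.mul_apply, ← pow_succ]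
        exact h0
      · have hk1 : k - 1 + 1 = k := by omega
        have he : (T ^ (k - 1)) (T β) = (T ^ k) β := by
          rw [← Module.End.mul_apply, ← pow_succ, hk1]
        rw [he]
        exact h1'
      · have h4 := hsum
        rw [Finset.sum_range_succ'] at h4
        rw [hc0, zero_smul, add_zero] at h4
        refine Eq.trans (Finset.sum_congr rfl fun t _ => ?_) h4
        rw [← Module.End.mul_apply, ← pow_succ]

theorem normal_iff_trace_ne_zero (p v u : ℕ) (hp : p.Prime) (F E : Type) [Field F] [Fintype F]
    [Field E] [Fintype E] [Algebra F E] [CharP F p] (hq : Fintype.card F = p ^ v) (hv : 1 ≤ v)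
    (hn : Module.finrank F E = p ^ u) (α : E) :
    (∃ b : Module.Basis (Fin (p ^ u)) F E, ∀ i, b i = α ^ (p ^ v) ^ (i : ℕ)) ↔
      Algebra.trace F E α ≠ 0 := by
  classical
  haveI hfp : Fact p.Prime := ⟨hp⟩
  haveI hE : CharP E p := charP_of_injective_algebraMap (algebraMap F E).injective p
  have hn1 : 0 < p ^ u := pow_pos hp.pos u
  have hq1 : 1 < p ^ v := Nat.one_lt_pow (by omega) hp.one_lt
  have hcardE : Fintype.card E = (p ^ v) ^ (p ^ u) := by
    rw [← hq, ← hn]; exact Module.card_eq_pow_finrank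
  -- the Frobenius algebra automorphism
  have hcomm : ∀ c : F, (algebraMap F E c) ^ p ^ v = algebraMap F E c := by
    intro c; rw [← map_pow, ← hq, FiniteField.pow_card]
  let σa : E →ₐ[F] E :=
    { toFun := fun x => x ^ p ^ v
      map_one' := one_pow _
      map_mul' := fun x y => mul_pow x y _
      map_zero' := zero_pow (pow_pos hp.pos v).ne'
      map_add' := fun x y => add_pow_char_pow x y p v
      commutes' := hcomm }
  have hbij : Function.Bijective σa := by
    have hinj : Function.Injective σa := RingHom.injective (σa : E →+* E)
    exact Finite.injective_iff_bijective.mp hinj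
  let σ : E ≃ₐ[F] E := AlgEquiv.ofBijective σa hbij
  have hσ : ∀ x : E, σ x = x ^ p ^ v := fun _ => rfl
  have hσpow : ∀ (i : ℕ) (x : E), (σ ^ i) x = x ^ (p ^ v) ^ i := by
    intro i
    induction i with
    | zero => intro x; simp [pow_zero]
    | succ k ihk =>
      intro x
      rw [pow_succ, AlgEquiv.mul_apply, hσ, ihk, ← pow_mul, ← pow_succ']
  let φ : Module.End F E := σ.toLinearMap
  have hφσ : ∀ (i : ℕ) (x : E), (φ ^ i) x = (σ ^ i) x := by
    intro i
    induction i with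
    | zero => intro x; rfl
    | succ k ihk =>
      intro x
      rw [pow_succ, Module.End.mul_apply, pow_succ, AlgEquiv.mul_apply, ihk]
      rfl
  have hφpow : ∀ (i : ℕ) (x : E), (φ ^ i) x = x ^ (p ^ v) ^ i := by
    intro i x; rw [hφσ, hσpow]
  have hφn : φ ^ p ^ u = 1 := by
    apply LinearMap.ext
    intro x
    rw [hφpow, ← hcardE, FiniteField.pow_card, Module.End.one_apply]
  -- polynomial identities
  have h1 : ((X : F[X]) - 1) ^ p ^ u = X ^ p ^ u - 1 := by
    rw [sub_pow_char_pow, one_pow]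
  have hXpoly : ((X : F[X]) - 1) ^ (p ^ u - 1) = ∑ i ∈ Finset.range (p ^ u), X ^ i := by
    have hX1 : (X : F[X]) - 1 ≠ 0 := by
      simpa using X_sub_C_ne_zero (1 : F)
    apply mul_right_cancel₀ hX1
    rw [geom_sum_mul, ← h1, ← pow_succ]
    congr 1
    omega
  have hkey : (φ - 1) ^ (p ^ u - 1) = ∑ i ∈ Finset.range (p ^ u), φ ^ i := by
    have h := congrArg (aeval φ) hXpoly
    simpa using h
  have hTn : (φ - 1) ^ p ^ u = 0 := by
    have h := congrArg (aeval φ) h1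
    simp only [map_pow, map_sub, aeval_X, map_one] at h
    rw [h, hφn, sub_self]
  -- cardinality of the Galois group
  have hcardGal : Fintype.card (E ≃ₐ[F] E) = p ^ u := by
    rw [Fintype.card_eq_nat_card, IsGalois.card_aut_eq_finrank, hn]
  -- powers of σ are pairwise distinct
  have hfinj : Function.Injective (fun i : Fin (p ^ u) => σ ^ (i : ℕ)) := by
    have key : ∀ i j : Fin (p ^ u), (i : ℕ) < (j : ℕ) → σ ^ (i : ℕ) = σ ^ (j : ℕ) → False := by
      intro i j hlt hij
      set d := (j : ℕ) - (i : ℕ) with hd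
      have hd0 : 0 < d := by omega
      have hdn : d < p ^ u := by have := j.2; omega
      have hσd : σ ^ d = 1 := by
        have h5 : σ ^ (i : ℕ) * σ ^ d = σ ^ (i : ℕ) * 1 := by
          rw [mul_one, ← pow_add, hij]
          congr 1
          omega
        exact mul_left_cancel h5
      have hall : ∀ x : E, x ^ (p ^ v) ^ d = x := by
        intro x
        rw [← hσpow d x, hσd, AlgEquiv.one_apply]
      have hvd : (p ^ v) ^ d = p ^ (v * d) := by rw [pow_mul]
      have hgne : (X ^ p ^ (v * d) - X : E[X]) ≠ 0 :=
        FiniteField.X_pow_card_pow_sub_X_ne_zero E (by positivity) hp.one_lt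
      have hdeg : (X ^ p ^ (v * d) - X : E[X]).natDegree = p ^ (v * d) :=
        FiniteField.X_pow_card_pow_sub_X_natDegree_eq E (by positivity) hp.one_lt
      have hsub : (Finset.univ : Finset E) ⊆ (X ^ p ^ (v * d) - X : E[X]).roots.toFinset := by
        intro x _
        rw [Multiset.mem_toFinset, mem_roots hgne]
        simp only [IsRoot.def, eval_sub, eval_pow, eval_X, sub_eq_zero]
        rw [← hvd, hall x]
      have hle : Fintype.card E ≤ p ^ (v * d) := by
        calc Fintype.card E = (Finset.univ : Finset E).card := Finset.card_univ.symm
          _ ≤ (X ^ p ^ (v * d) - X : E[X]).roots.toFinset.card := Finset.card_le_card hsub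
          _ ≤ Multiset.card (X ^ p ^ (v * d) - X : E[X]).roots := Multiset.toFinset_card_le _
          _ ≤ (X ^ p ^ (v * d) - X : E[X]).natDegree := card_roots' _
          _ = p ^ (v * d) := hdeg
      have hlt2 : (p ^ v) ^ d < (p ^ v) ^ (p ^ u) := Nat.pow_lt_pow_right hq1 hdn
      rw [hvd] at hlt2
      omega
    intro i j hij
    by_contra hne
    rcases Nat.lt_or_ge (i : ℕ) (j : ℕ) with h | h
    · exact key i j h hij
    · have h' : (j : ℕ) < (i : ℕ) := by
        rcases Nat.lt_or_ge (j : ℕ) (i : ℕ) with h2 | h2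
        · exact h2
        · exact absurd (Fin.ext (le_antisymm h h2 : (j : ℕ) = (i : ℕ)).symm) hne
      exact key j i h' hij.symm
  have hfbij : Function.Bijective (fun i : Fin (p ^ u) => σ ^ (i : ℕ)) := by
    rw [Fintype.bijective_iff_injective_and_card]
    exact ⟨hfinj, by simp [hcardGal]⟩
  -- the trace formula
  have htrace : ∀ x : E,
      algebraMap F E (Algebra.trace F E x) = ((φ - 1) ^ (p ^ u - 1)) x := by
    intro x
    rw [trace_eq_sum_automorphisms, hkey, LinearMap.sum_apply]
    rw [← Fintype.sum_bijective _ hfbij _ (fun τ : E ≃ₐ[F] E => τ x) (fun i => rfl)]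
    rw [← Fin.sum_univ_eq_sum_range (fun i => (φ ^ i) x) (p ^ u)]
    exact Finset.sum_congr rfl fun i _ => (hφσ (i : ℕ) x).symm
  have htriff : ∀ x : E, Algebra.trace F E x = 0 ↔ ((φ - 1) ^ (p ^ u - 1)) x = 0 := by
    intro x
    rw [← htrace]
    constructor
    · intro h; rw [h, map_zero]
    · intro h; exact (algebraMap F E).injective (by rw [h, map_zero])
  constructor
  · rintro ⟨b, hb⟩ htr0
    have hTα : ((φ - 1) ^ (p ^ u - 1)) α = 0 := (htriff α).mp htr0
    have hcom : ∀ i : ℕ, (φ - 1) ^ (p ^ u - 1) * φ ^ i = φ ^ i * (φ - 1) ^ (p ^ u - 1) :=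
      fun i => (((Commute.refl φ).sub_left (Commute.one_left φ)).pow_pow (p ^ u - 1) i).eq
    have hTzero : ((φ - 1) ^ (p ^ u - 1) : Module.End F E) = 0 := by
      apply b.ext
      intro i
      rw [hb i, ← hφpow, LinearMap.zero_apply, ← Module.End.mul_apply, hcom,
        Module.End.mul_apply, hTα, map_zero]
    have hne := Algebra.trace_ne_zero F E
    apply hne
    apply LinearMap.ext
    intro x
    rw [LinearMap.zero_apply]
    exact (htriff x).mpr (by rw [hTzero]; rfl)
  · intro htr
    have hTα : ((φ - 1) ^ (p ^ u - 1)) α ≠ 0 := fun h => htr ((htriff α).mpr h)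
    set T : Module.End F E := φ - 1 with hTdef
    set vfun : Fin (p ^ u) → E := fun i => α ^ (p ^ v) ^ (i : ℕ) with hvdef
    set S := Submodule.span F (Set.range vfun) with hSdef
    have hαS : α ∈ S := by
      apply Submodule.subset_span
      exact ⟨⟨0, hn1⟩, by simp [hvdef]⟩
    have hφS : ∀ x ∈ S, φ x ∈ S := by
      have hmap : Submodule.map φ S ≤ S := by
        rw [hSdef, Submodule.map_span, Submodule.span_le]
        rintro _ ⟨_, ⟨i, rfl⟩, rfl⟩
        have hiv : φ (vfun i) = α ^ (p ^ v) ^ ((i : ℕ) + 1) := by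
          show (vfun i) ^ p ^ v = _
          rw [hvdef]
          simp only
          rw [← pow_mul, ← pow_succ]
        rw [hiv]
        rcases Nat.lt_or_ge ((i : ℕ) + 1) (p ^ u) with h | h
        · exact Submodule.subset_span ⟨⟨(i : ℕ) + 1, h⟩, rfl⟩
        · have hieq : (i : ℕ) + 1 = p ^ u := by have := i.2; omega
          rw [hieq, ← hcardE, FiniteField.pow_card]
          exact hαS
      intro x hx
      exact hmap ⟨x, hx, rfl⟩
    have hTS : ∀ x ∈ S, T x ∈ S := by
      intro x hx
      have he : T x = φ x - x := by
        rw [hTdef, LinearMap.sub_apply, Module.End.one_apply]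
      rw [he]
      exact Submodule.sub_mem _ (hφS x hx) hx
    have hTiS : ∀ i : ℕ, (T ^ i) α ∈ S := by
      intro i
      induction i with
      | zero => simpa using hαS
      | succ k ihk =>
        rw [pow_succ', Module.End.mul_apply]
        exact hTS _ ihk
    have hli : LinearIndependent F (fun i : Fin (p ^ u) => (T ^ (i : ℕ)) α) := by
      rw [Fintype.linearIndependent_iff]
      intro c hc i
      classical
      set c' : ℕ → F := fun t => if h : t < p ^ u then c ⟨t, h⟩ else 0 with hc'
      have haux := aux_nilp_li T (p ^ u) α c' (by rw [hTn]; rfl) hTα ?_ (i : ℕ) i.2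
      · rw [hc'] at haux
        simpa only [i.2, dif_pos, Fin.eta] using haux
      · rw [← Fin.sum_univ_eq_sum_range (fun t => c' t • (T ^ t) α) (p ^ u), ← hc]
        refine Finset.sum_congr rfl fun t _ => ?_
        rw [hc']
        simp only [t.2, dif_pos, Fin.eta]
    have hspan : ⊤ ≤ S := by
      have h1 : Submodule.span F (Set.range (fun i : Fin (p ^ u) => (T ^ (i : ℕ)) α)) = ⊤ :=
        hli.span_eq_top_of_card_eq_finrank (by simp [hn])
      rw [← h1, Submodule.span_le]
      rintro _ ⟨i, rfl⟩
      exact hTiS (i : ℕ)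
    exact ⟨basisOfTopLeSpanOfCardEqFinrank vfun hspan (by simp [hn]),
      fun i => by rw [coe_basisOfTopLeSpanOfCardEqFinrank]⟩
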